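/- Let A ∈ ℝ^{n×n} be Hurwitz (all eigenvalues have negative real part), and suppose Π ∈ ℝ^{n×m} satisfies the Francis equations ΠS = AΠ + P and 0 = CΠ + Q for given matrices S, P, C, Q. Then for every solution (z(t), w(t)) of ż = Az + Pw, ẇ = Sw, the output y(t) = Cz(t) + Qw(t) tends to 0 as t → ∞. -/

import Mathlib

open Set Filter Matrix

/-- A real square matrix is Hurwitz if all its (complex) eigenvalues
have negative real part. -/
def Hurwitz {n : ℕ} (A : Matrix (Fin n) (Fin n) ℝ) : Prop :=
  ∀ μ ∈ spectrum ℂ (A.map (algebraMap ℝ ℂ)), μ.re < 0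

/-- The coefficient `exp (μ t) * t^k / k!` tends to zero when `Re μ < 0`. -/
lemma aux_coef_tendsto (μ : ℂ) (hμ : μ.re < 0) (k : ℕ) :
    Tendsto (fun t : ℝ => Complex.exp (μ * t) * ((t : ℂ) ^ k / (k.factorial : ℂ)))
      atTop (nhds 0) := by
  rw [tendsto_zero_iff_norm_tendsto_zero]
  have hpos : (0 : ℝ) < -μ.re := by linarith
  have h2 : Tendsto (fun t : ℝ => -μ.re * t) atTop atTop :=
    Tendsto.const_mul_atTop hpos tendsto_id
  have h3 := (Real.tendsto_pow_mul_exp_neg_atTop_nhds_zero k).comp h2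
  have h4 : Tendsto (fun t : ℝ => t ^ k * Real.exp (μ.re * t)) atTop (nhds 0) := by
    have h5 := h3.const_mul (((-μ.re) ^ k)⁻¹)
    rw [mul_zero] at h5
    refine h5.congr fun t => ?_
    have hneg : -(-μ.re * t) = μ.re * t := by ring
    simp only [Function.comp_apply, hneg, mul_pow]
    have hnz : (-μ.re) ^ k ≠ 0 := pow_ne_zero _ hpos.ne'
    field_simp
  have h6 := h4.const_mul ((k.factorial : ℝ))⁻¹
  rw [mul_zero] at h6
  refine Tendsto.congr' ?_ h6
  filter_upwards [eventually_ge_atTop (0 : ℝ)] with t ht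
  rw [norm_mul, norm_div, norm_pow]
  have h7 : ‖Complex.exp (μ * t)‖ = Real.exp (μ.re * t) := by
    rw [Complex.norm_exp]
    congr 1
    simp [Complex.mul_re]
  have h8 : ‖((t : ℝ) : ℂ)‖ = t := by
    rw [Complex.norm_real, Real.norm_eq_abs, abs_of_nonneg ht]
  have h9 : ‖((k.factorial : ℕ) : ℂ)‖ = (k.factorial : ℝ) := by
    simp
  rw [h7, h8, h9]
  ring

/-- Every solution of a linear ODE with Hurwitz-type matrix tends to zero. -/
lemma aux_ode_tendsto {n : ℕ} (B : Matrix (Fin n) (Fin n) ℂ)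
    (hB : ∀ μ ∈ spectrum ℂ B, μ.re < 0) (f : ℝ → Fin n → ℂ)
    (hf : ∀ t : ℝ, HasDerivAt f (B.mulVec (f t)) t) :
    Tendsto f atTop (nhds 0) := by
  classical
  set T : Module.End ℂ (Fin n → ℂ) := Matrix.toLinAlgEquiv' B with hT
  set Good : (Fin n → ℂ) → Prop := fun v => ∃ g : ℝ → Fin n → ℂ, g 0 = v ∧
    (∀ t : ℝ, HasDerivAt g (B.mulVec (g t)) t) ∧ Tendsto g atTop (nhds 0) with hGoodDef
  have h0 : Good 0 := by
    refine ⟨fun _ => 0, rfl, fun t => ?_, tendsto_const_nhds⟩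
    simpa [Matrix.mulVec_zero] using hasDerivAt_const t (0 : Fin n → ℂ)
  have hadd : ∀ x y, Good x → Good y → Good (x + y) := by
    rintro x y ⟨g₁, hg₁0, hg₁d, hg₁l⟩ ⟨g₂, hg₂0, hg₂d, hg₂l⟩
    refine ⟨fun t => g₁ t + g₂ t, by simp only []; rw [hg₁0, hg₂0], fun t => ?_, by
      simpa using hg₁l.add hg₂l⟩
    have := (hg₁d t).add (hg₂d t); rw [← Matrix.mulVec_add] at this; exact this
  have hgen : ∀ μ : ℂ, ∀ v ∈ T.maxGenEigenspace μ, Good v := by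
    intro μ v hv
    rcases eq_or_ne v 0 with rfl | hv0
    · exact h0
    have hne : T.maxGenEigenspace μ ≠ ⊥ := fun h => hv0 (by simpa [h] using hv)
    have hμspec : μ ∈ spectrum ℂ B := by
      rw [← AlgEquiv.spectrum_eq (Matrix.toLinAlgEquiv' (n := Fin n) (R := ℂ)) B]
      refine Module.End.hasEigenvalue_iff_mem_spectrum.mp ?_
      exact Module.End.HasUnifEigenvalue.lt zero_lt_one hne
    have hμ : μ.re < 0 := hB μ hμspec
    obtain ⟨K, hK⟩ := (Module.End.mem_maxGenEigenspace T μ v).mp hv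
    set N : Matrix (Fin n) (Fin n) ℂ := B - μ • 1 with hN
    have hpowapply : ∀ k : ℕ, ((T - μ • 1) ^ k) v = (N ^ k).mulVec v := by
      intro k
      have h1 : (T - μ • (1 : Module.End ℂ (Fin n → ℂ))) ^ k
          = Matrix.toLinAlgEquiv' (N ^ k) := by
        rw [map_pow, map_sub, _root_.map_smul, _root_.map_one, hT]
      rw [h1, Matrix.toLinAlgEquiv'_apply]
    have hKv : (N ^ K).mulVec v = 0 := by rw [← hpowapply]; exact hK
    have hKm : (N ^ (K + 1)).mulVec v = 0 := by
      rw [pow_succ', ← Matrix.mulVec_mulVec, hKv, Matrix.mulVec_zero]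
    set c : ℕ → ℝ → ℂ := fun k t => Complex.exp (μ * t) * ((t : ℂ) ^ k / (k.factorial : ℂ))
      with hc
    set u : ℕ → Fin n → ℂ := fun k => (N ^ k).mulVec v with hu
    set g : ℝ → Fin n → ℂ := fun t => ∑ k ∈ Finset.range (K + 1), c k t • u k with hg
    have hg0 : g 0 = v := by
      simp only [hg]
      rw [Finset.sum_eq_single_of_mem 0 (Finset.mem_range.mpr (Nat.succ_pos K))]
      · simp [hc, hu]
      · intro k _ hk
        have : ((0 : ℝ) : ℂ) ^ k = 0 := by
          rw [Complex.ofReal_zero, zero_pow hk]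
        simp [hc, this]
        tauto
    have hcderiv : ∀ (k : ℕ) (t : ℝ),
        HasDerivAt (c k) (μ * c k t + (if k = 0 then 0 else c (k - 1) t)) t := by
      intro k t
      have hexp : HasDerivAt (fun s : ℝ => Complex.exp (μ * s)) (Complex.exp (μ * t) * μ) t := by
        have h1 : HasDerivAt (fun s : ℝ => (μ * s : ℂ)) μ t := by
          simpa using (Complex.ofRealCLM.hasDerivAt (x := t)).const_mul μ
        exact h1.cexp
      have hpow : HasDerivAt (fun s : ℝ => ((s : ℂ) ^ k / (k.factorial : ℂ)))
          (((k : ℂ) * (t : ℂ) ^ (k - 1)) / (k.factorial : ℂ)) t := by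
        have h2 : HasDerivAt (fun s : ℝ => ((s ^ k : ℝ) : ℂ)) (((k : ℝ) * t ^ (k - 1) : ℝ) : ℂ) t :=
          (hasDerivAt_pow k t).ofReal_comp
        have h3 : HasDerivAt (fun s : ℝ => ((s : ℂ) ^ k)) (((k : ℝ) * t ^ (k - 1) : ℝ) : ℂ) t := by
          convert h2 using 2 with s
          push_cast
          ring
        have h4 := h3.div_const ((k.factorial : ℂ))
        convert h4 using 1
        · rfl
        push_cast
        ring
      have hmul := hexp.mul hpow
      convert hmul using 1
      · rfl
      · rfl
      rcases k with _ | j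
      · simp [hc]
        ring
      · simp only [if_neg (Nat.succ_ne_zero j), Nat.add_sub_cancel, hc]
        have hfac : (((j + 1).factorial : ℕ) : ℂ) = ((j : ℂ) + 1) * ((j.factorial : ℕ) : ℂ) := by
          push_cast [Nat.factorial_succ]
          ring
        have hne1 : ((j : ℂ) + 1) ≠ 0 := Nat.cast_add_one_ne_zero j
        have hne2 : ((j.factorial : ℕ) : ℂ) ≠ 0 := by
          exact_mod_cast Nat.cast_ne_zero.mpr (Nat.factorial_ne_zero j)
        rw [hfac]
        push_cast
        field_simp
    have hgderiv : ∀ t : ℝ, HasDerivAt g (B.mulVec (g t)) t := by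
      intro t
      have hsum : HasDerivAt g
          (∑ k ∈ Finset.range (K + 1),
            (μ * c k t + (if k = 0 then 0 else c (k - 1) t)) • u k) t := by
        simp only [hg]
        exact HasDerivAt.fun_sum fun k _ => (hcderiv k t).smul_const (u k)
      convert hsum using 1
      have hBsplit : B.mulVec (g t) = μ • g t + N.mulVec (g t) := by
        have hBeq : μ • (1 : Matrix (Fin n) (Fin n) ℂ) + N = B := by rw [hN]; abel
        rw [← hBeq, Matrix.add_mulVec, Matrix.smul_mulVec, Matrix.one_mulVec]
      rw [hBsplit]
      have hNg : N.mulVec (g t) = ∑ k ∈ Finset.range (K + 1), c k t • u (k + 1) := by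
        simp only [hg]
        rw [show (N.mulVec (∑ k ∈ Finset.range (K + 1), c k t • u k))
            = ∑ k ∈ Finset.range (K + 1), c k t • N.mulVec (u k) by
          rw [← Matrix.mulVecLin_apply]
          rw [map_sum]
          refine Finset.sum_congr rfl fun k _ => ?_
          rw [_root_.map_smul, Matrix.mulVecLin_apply]]
        refine Finset.sum_congr rfl fun k _ => ?_
        rw [hu]
        rw [Matrix.mulVec_mulVec, ← pow_succ']
      have hshift : ∑ k ∈ Finset.range (K + 1),
          (if k = 0 then (0 : ℂ) else c (k - 1) t) • u k
          = ∑ k ∈ Finset.range K, c k t • u (k + 1) := by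
        rw [Finset.sum_range_succ']
        simp
      have hNg' : N.mulVec (g t) = ∑ k ∈ Finset.range K, c k t • u (k + 1) := by
        rw [hNg, Finset.sum_range_succ]
        have : u (K + 1) = 0 := hKm
        rw [this, smul_zero, add_zero]
      rw [hNg']
      rw [← hshift]
      simp only [hg]
      rw [Finset.smul_sum, ← Finset.sum_add_distrib]
      refine Finset.sum_congr rfl fun k _ => ?_
      rw [add_smul, smul_smul]
    have hglim : Tendsto g atTop (nhds 0) := by
      simp only [hg]
      have : Tendsto (fun t : ℝ => ∑ k ∈ Finset.range (K + 1), c k t • u k) atTop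
          (nhds (∑ k ∈ Finset.range (K + 1), (0 : Fin n → ℂ))) := by
        refine tendsto_finset_sum _ fun k _ => ?_
        have := (aux_coef_tendsto μ hμ k).smul_const (u k)
        rwa [zero_smul] at this
      simpa using this
    exact ⟨g, hg0, hgderiv, hglim⟩
  have hGoodf0 : Good (f 0) := by
    have hmem : f 0 ∈ ⨆ μ : ℂ, T.maxGenEigenspace μ := by
      rw [Module.End.iSup_maxGenEigenspace_eq_top]
      exact Submodule.mem_top
    exact Submodule.iSup_induction (motive := Good) _ hmem hgen h0 hadd
  obtain ⟨g, hg0, hgd, hgl⟩ := hGoodf0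
  have huniq : ∀ t : ℝ, f t = g t := by
    intro t
    set L := LinearMap.toContinuousLinearMap (Matrix.mulVecLin B) with hL
    have hlip : ∀ s : ℝ, LipschitzOnWith ‖L‖₊ (fun x : Fin n → ℂ => B.mulVec x) Set.univ := by
      intro s
      have h1 : (fun x : Fin n → ℂ => B.mulVec x) = ⇑L := by
        funext x
        simp [hL]
      rw [h1]
      exact L.lipschitz.lipschitzOnWith
    have hmem : t ∈ Icc (-(|t| + 1)) (|t| + 1) := by
      constructor
      · have := neg_abs_le t; linarith
      · have := le_abs_self t; linarith
    have h0mem : (0 : ℝ) ∈ Ioo (-(|t| + 1)) (|t| + 1) := by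
      constructor
      · have := abs_nonneg t; linarith
      · have := abs_nonneg t; linarith
    have := ODE_solution_unique_of_mem_Icc (v := fun _ x => B.mulVec x)
      (s := fun _ => Set.univ) (K := ‖L‖₊) (fun s _ => hlip s) h0mem
      (fun s _ => (hf s).continuousAt.continuousWithinAt)
      (fun s _ => hf s) (fun _ _ => Set.mem_univ _)
      (fun s _ => (hgd s).continuousAt.continuousWithinAt)
      (fun s _ => hgd s) (fun _ _ => Set.mem_univ _) (by rw [hg0])
    exact this hmem
  rw [funext huniq]
  exact hgl

/-- If `A` is Hurwitz and `Π` solves the Francis equations `Π S = A Π + P`, `0 = C Π + Q`,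
then along every solution of `ż = Az + Pw`, `ẇ = Sw`, the output `y = Cz + Qw` tends to `0`. -/
theorem stmt3 {n m p : ℕ}
    (A : Matrix (Fin n) (Fin n) ℝ) (S : Matrix (Fin m) (Fin m) ℝ)
    (P : Matrix (Fin n) (Fin m) ℝ) (C : Matrix (Fin p) (Fin n) ℝ)
    (Q : Matrix (Fin p) (Fin m) ℝ) (Pi : Matrix (Fin n) (Fin m) ℝ)
    (hA : Hurwitz A)
    (hFrancis1 : Pi * S = A * Pi + P)
    (hFrancis2 : (0 : Matrix (Fin p) (Fin m) ℝ) = C * Pi + Q)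
    (z : ℝ → Fin n → ℝ) (w : ℝ → Fin m → ℝ)
    (hz : ∀ t : ℝ, HasDerivAt z (A.mulVec (z t) + P.mulVec (w t)) t)
    (hw : ∀ t : ℝ, HasDerivAt w (S.mulVec (w t)) t) :
    Tendsto (fun t : ℝ => C.mulVec (z t) + Q.mulVec (w t)) atTop (nhds 0) := by
  classical
  set e : ℝ → Fin n → ℝ := fun t => z t - Pi.mulVec (w t) with he
  -- derivative of t ↦ Pi.mulVec (w t)
  have hPiw : ∀ t : ℝ, HasDerivAt (fun t => Pi.mulVec (w t)) (Pi.mulVec (S.mulVec (w t))) t := by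
    intro t
    set L := LinearMap.toContinuousLinearMap (Matrix.mulVecLin Pi) with hL
    have h1 : HasDerivAt (fun t => L (w t)) (L (S.mulVec (w t))) t :=
      L.hasFDerivAt.comp_hasDerivAt t (hw t)
    simpa [hL] using h1
  have hle : ∀ t : ℝ, HasDerivAt e (A.mulVec (e t)) t := by
    intro t
    have h1 := (hz t).sub (hPiw t)
    have h2 : Pi.mulVec (S.mulVec (w t)) = A.mulVec (Pi.mulVec (w t)) + P.mulVec (w t) := by
      rw [Matrix.mulVec_mulVec, hFrancis1, Matrix.add_mulVec, Matrix.mulVec_mulVec]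
    rw [h2] at h1
    have h3 : A.mulVec (z t) + P.mulVec (w t) - (A.mulVec (Pi.mulVec (w t)) + P.mulVec (w t))
        = A.mulVec (e t) := by
      rw [he]
      rw [Matrix.mulVec_sub]
      abel
    rwa [h3] at h1
  -- output in terms of e
  have hout : ∀ t : ℝ, C.mulVec (z t) + Q.mulVec (w t) = C.mulVec (e t) := by
    intro t
    have h2 : C.mulVec (Pi.mulVec (w t)) + Q.mulVec (w t) = 0 := by
      rw [Matrix.mulVec_mulVec, ← Matrix.add_mulVec, ← hFrancis2, Matrix.zero_mulVec]
    simp only [he]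
    rw [Matrix.mulVec_sub]
    calc C.mulVec (z t) + Q.mulVec (w t)
        = C.mulVec (z t) - C.mulVec (Pi.mulVec (w t))
            + (C.mulVec (Pi.mulVec (w t)) + Q.mulVec (w t)) := by abel
      _ = C.mulVec (z t) - C.mulVec (Pi.mulVec (w t)) := by rw [h2, add_zero]
  -- complexify
  set B : Matrix (Fin n) (Fin n) ℂ := A.map (algebraMap ℝ ℂ) with hB
  set f : ℝ → Fin n → ℂ := fun t i => ((e t i : ℝ) : ℂ) with hfdef
  have hfB : ∀ t : ℝ, HasDerivAt f (B.mulVec (f t)) t := by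
    intro t
    rw [hasDerivAt_pi]
    intro i
    have h1 : HasDerivAt (fun s => e s i) (A.mulVec (e t) i) t := by
      have := hle t
      exact hasDerivAt_pi.mp this i
    have h2 := h1.ofReal_comp
    have h3 : ((A.mulVec (e t) i : ℝ) : ℂ) = B.mulVec (f t) i := by
      rw [hB, hfdef]
      simp only [Matrix.mulVec, dotProduct, Matrix.map_apply]
      push_cast
      rfl
    rwa [h3] at h2
  have hfl : Tendsto f atTop (nhds 0) := aux_ode_tendsto B hA f hfB
  have hel : Tendsto e atTop (nhds 0) := by
    rw [tendsto_pi_nhds]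
    intro i
    rw [tendsto_pi_nhds] at hfl
    have h1 := (Complex.continuous_re.tendsto (0 : ℂ)).comp (hfl i)
    simpa [Function.comp_def, hfdef] using h1
  -- conclude
  have hC : Tendsto (fun t : ℝ => C.mulVec (e t)) atTop (nhds 0) := by
    set L := LinearMap.toContinuousLinearMap (Matrix.mulVecLin C) with hL
    have h1 := (L.continuous.tendsto 0).comp hel
    have h2 : (fun t : ℝ => L (e t)) = fun t : ℝ => C.mulVec (e t) := by
      funext t
      simp [hL]
    rw [← h2]
    simpa [Function.comp_def] using h1
  refine hC.congr fun t => (hout t).symm
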